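/- For any complex q with |q| < 1 and any complex x, and any positive integer k, the compact quantum dilogarithm satisfies the folding formula Ψ_q(x) = ∏_{j=1}^{k} Ψ_{q^k}(q^{k-2j+1} x). In particular, Ψ_q(x) = Ψ_{q²}(qx)·Ψ_{q²}(q⁻¹x). -/

import Mathlib

open Filter Complex

lemma mult_zero {ι : Type*} {f : ι → ℂ} (i : ι) (h : f i = 0) : Multipliable f := by
  refine ⟨0, ?_⟩
  rw [HasProd]
  apply Filter.Tendsto.congr' _ tendsto_const_nhds
  filter_upwards [Filter.eventually_ge_atTop ({i} : Finset ι)] with s hs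
  exact (Finset.prod_eq_zero (hs (Finset.mem_singleton_self i)) h).symm

lemma mult_one_sub {f : ℕ → ℂ} (hf : Summable f) : Multipliable (fun n => 1 - f n) := by
  by_cases h : ∀ n, 1 - f n ≠ 0
  · have h2 : ∀ᶠ n in atTop, ‖f n‖ ≤ 1/2 := by
      have := hf.tendsto_atTop_zero.eventually
        (Metric.ball_mem_nhds (0:ℂ) (by norm_num : (0:ℝ) < 1/2))
      filter_upwards [this] with n hn
      simpa [dist_eq_norm] using hn.le
    have hlog : Summable (fun n => Complex.log (1 - f n)) := by
      apply Summable.of_norm_bounded_eventually_nat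
        (hf.norm.mul_left (3/2))
      filter_upwards [h2] with n hn
      calc ‖Complex.log (1 - f n)‖ = ‖Complex.log (1 + (- f n))‖ := by rw [sub_eq_add_neg]
        _ ≤ 3/2 * ‖-f n‖ := norm_log_one_add_half_le_self (by simpa using hn)
        _ = 3/2 * ‖f n‖ := by rw [norm_neg]
    exact Complex.multipliable_of_summable_log (f := fun n => 1 - f n) hlog
  · push_neg at h; obtain ⟨n, hn⟩ := h; exact mult_zero n hn

def foldEquiv (k : ℕ) [NeZero k] : Fin k × ℕ ≃ ℕ :=
  (Equiv.prodCongr Fin.revPerm (Equiv.refl ℕ)).trans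
    ((Equiv.prodComm (Fin k) ℕ).trans (Nat.divModEquiv k).symm)

lemma foldEquiv_apply (k : ℕ) [NeZero k] (j : Fin k) (n : ℕ) :
    foldEquiv k (j, n) = n * k + (k - ((j : ℕ) + 1)) := by
  simp [foldEquiv, Nat.divModEquiv, Fin.val_rev]

attribute [irreducible] foldEquiv


/-- The q-Pochhammer symbol `(x; q)_∞ = ∏_{m=0}^∞ (1 - qᵐ x)`. -/
noncomputable def qPochInf (x q : ℂ) : ℂ := ∏' m : ℕ, (1 - q ^ m * x)

/-- The compact quantum dilogarithm `Ψ_q(x) = 1/(-qx; q²)_∞`. -/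
noncomputable def Psi (q x : ℂ) : ℂ := (qPochInf (-q * x) (q ^ 2))⁻¹

set_option maxHeartbeats 1000000 in
/-- The folding formula `Ψ_q(x) = ∏_{j=1}^{k} Ψ_{q^k}(q^{k-2j+1} x)` for the compact
quantum dilogarithm; in particular `Ψ_q(x) = Ψ_{q²}(qx)·Ψ_{q²}(q⁻¹x)`. -/
theorem Psi_folding (q x : ℂ) (hq0 : q ≠ 0) (hq : ‖q‖ < 1) (k : ℕ) (hk : 0 < k) :
    Psi q x = (∏ j ∈ Finset.range k, Psi (q ^ k) (q ^ ((k : ℤ) - 2 * ((j : ℤ) + 1) + 1) * x)) ∧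
      Psi q x = Psi (q ^ 2) (q * x) * Psi (q ^ 2) (q⁻¹ * x) := by
  have main : ∀ k : ℕ, 0 < k →
      Psi q x = ∏ j ∈ Finset.range k, Psi (q ^ k) (q ^ ((k : ℤ) - 2 * ((j : ℤ) + 1) + 1) * x) := by
    intro k hk
    haveI : NeZero k := ⟨hk.ne'⟩
    set F : ℕ → ℂ := fun m => 1 - (q ^ 2) ^ m * (-q * x) with hFdef
    have habs : ‖(q:ℂ) ^ 2‖ < 1 := by
      rw [norm_pow]
      calc ‖q‖ ^ 2 ≤ ‖q‖ := pow_le_of_le_one (norm_nonneg q) hq.le (by norm_num)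
        _ < 1 := hq
    have hsum : Summable (fun m : ℕ => (q ^ 2) ^ m * (-q * x)) :=
      (summable_geometric_of_norm_lt_one habs).mul_right _
    have hF : Multipliable F := mult_one_sub hsum
    set e : Fin k × ℕ ≃ ℕ := foldEquiv k with hedef
    have he : ∀ (j : Fin k) (n : ℕ), e (j, n) = n * k + (k - ((j : ℕ) + 1)) :=
      foldEquiv_apply k
    have hFe : Multipliable (F ∘ e) := e.multipliable_iff.mpr hF
    have habsk : ‖((q : ℂ) ^ k) ^ 2‖ < 1 := by
      rw [norm_pow, norm_pow]
      exact pow_lt_one₀ (pow_nonneg (norm_nonneg q) k)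
        (pow_lt_one₀ (norm_nonneg q) hq hk.ne') (by norm_num)
    have key : ∀ (j : Fin k) (n : ℕ),
        (1 - ((q ^ k) ^ 2) ^ n * (-(q ^ k) * (q ^ ((k : ℤ) - 2 * ((j : ℤ) + 1) + 1) * x)))
          = F (e (j, n)) := by
      intro j n
      have hj : (j : ℕ) + 1 ≤ k := j.is_lt
      rw [hFdef]
      simp only [he]
      set M : ℕ := n * k + (k - ((j : ℕ) + 1)) with hM
      have hpow : ((q ^ k) ^ 2) ^ n * ((q ^ k) * q ^ ((k : ℤ) - 2 * ((j : ℤ) + 1) + 1))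
          = (q ^ 2) ^ M * q := by
        have step : ((q ^ k) ^ 2) ^ n * ((q ^ k) * q ^ ((k : ℤ) - 2 * ((j : ℤ) + 1) + 1))
            = q ^ (2 * M + 1) := by
          rw [← pow_mul, ← pow_mul, ← zpow_natCast q (k * (2 * n)), ← zpow_natCast q k,
            ← zpow_add₀ hq0, ← zpow_add₀ hq0, ← zpow_natCast q (2 * M + 1)]
          congr 1
          rw [hM]
          push_cast [Nat.cast_sub hj]
          ring
        rw [step, pow_succ, pow_mul]
      linear_combination x * hpow
    calc Psi q x = (∏' p : Fin k × ℕ, F (e p))⁻¹ := by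
          rw [Psi, qPochInf, e.tprod_eq F]
      _ = (∏ j : Fin k, ∏' n : ℕ, F (e (j, n)))⁻¹ := by
          have hinner : ∀ j : Fin k, Multipliable (fun n : ℕ => F (e (j, n))) := by
            intro j
            have h1 : Multipliable (fun n : ℕ =>
                1 - ((q ^ k) ^ 2) ^ n * (-(q ^ k) * (q ^ ((k : ℤ) - 2 * ((j : ℤ) + 1) + 1) * x))) :=
              mult_one_sub ((summable_geometric_of_norm_lt_one habsk).mul_right _)
            exact (multipliable_congr (fun n => key j n)).mp h1
          rw [Multipliable.tprod_prod' (f := fun p : Fin k × ℕ => F (e p)) hFe hinner, tprod_fintype]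
      _ = ∏ j : Fin k, (∏' n : ℕ, F (e (j, n)))⁻¹ := by rw [Finset.prod_inv_distrib]
      _ = ∏ j : Fin k, Psi (q ^ k) (q ^ ((k : ℤ) - 2 * ((j : ℤ) + 1) + 1) * x) := by
          refine Finset.prod_congr rfl fun j _ => ?_
          rw [Psi, qPochInf]
          congr 1
          exact tprod_congr fun n => (key j n).symm
      _ = ∏ j ∈ Finset.range k, Psi (q ^ k) (q ^ ((k : ℤ) - 2 * ((j : ℤ) + 1) + 1) * x) :=
          Fin.prod_univ_eq_prod_range
            (fun j : ℕ => Psi (q ^ k) (q ^ ((k : ℤ) - 2 * ((j : ℤ) + 1) + 1) * x)) k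
  refine ⟨main k hk, ?_⟩
  rw [main 2 (by norm_num)]
  rw [Finset.prod_range_succ, Finset.prod_range_succ, Finset.prod_range_zero, one_mul]
  norm_num
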